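/- Let $\hat{\Sigma}$ be an $n \times n$ real symmetric positive definite matrix. Define the Kullback-Leibler divergence between two $n \times n$ symmetric positive definite matrices $\Sigma$ and $\hat{\Sigma}$ as $\mathcal{D}_{KL}(\Sigma \| \hat{\Sigma}) = \tfrac{1}{2}(-\log\det \Sigma + \log\det \hat{\Sigma} + \mathrm{tr}(\Sigma \hat{\Sigma}^{-1}) - n)$. Then the diagonal matrix $\Sigma_D = \mathrm{diag}(\gamma_1^{-1}, \ldots, \gamma_n^{-1})$, where $\gamma_i$ is the $i$-th diagonal entry of $\hat{\Sigma}^{-1}$, minimizes $\mathcal{D}_{KL}(D \| \hat{\Sigma})$ over all positive definite diagonal matrices $D$. -/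

import Mathlib

open Matrix

noncomputable def KL {n : ℕ} (A B : Matrix (Fin n) (Fin n) ℝ) : ℝ :=
  (1 / 2) * (-Real.log A.det + Real.log B.det + (A * B⁻¹).trace - n)

lemma diag_entry_pos {n : ℕ} {M : Matrix (Fin n) (Fin n) ℝ} (hM : M.PosDef) (i : Fin n) :
    0 < M i i := by
  have := hM.diag_pos (i := i)
  simpa [dotProduct, mulVec, Pi.single_apply] using this

lemma trace_diag_mul {n : ℕ} (d : Fin n → ℝ) (B : Matrix (Fin n) (Fin n) ℝ) :
    (Matrix.diagonal d * B).trace = ∑ i, d i * B i i := by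
  simp [Matrix.trace, Matrix.diag, Matrix.mul_apply, Matrix.diagonal_apply,
    Finset.sum_ite_eq]

theorem diag_minimizes_KL {n : ℕ} (S : Matrix (Fin n) (Fin n) ℝ)
    (hS : S.PosDef) :
    ∀ d : Fin n → ℝ, (∀ i, 0 < d i) →
      KL (Matrix.diagonal (fun i => (S⁻¹ i i)⁻¹)) S ≤ KL (Matrix.diagonal d) S := by
  intro d hd
  have hinv : (S⁻¹).PosDef := hS.inv
  have hγ : ∀ i, 0 < S⁻¹ i i := fun i => diag_entry_pos hinv i
  unfold KL
  have key : (-Real.log (Matrix.diagonal (fun i => (S⁻¹ i i)⁻¹)).det +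
        (Matrix.diagonal (fun i => (S⁻¹ i i)⁻¹) * S⁻¹).trace) ≤
      (-Real.log (Matrix.diagonal d).det + (Matrix.diagonal d * S⁻¹).trace) := by
    rw [Matrix.det_diagonal, Matrix.det_diagonal, trace_diag_mul, trace_diag_mul,
      Real.log_prod (fun i _ => (inv_pos.mpr (hγ i)).ne'),
      Real.log_prod (fun i _ => (hd i).ne'), ← Finset.sum_neg_distrib,
      ← Finset.sum_neg_distrib, ← Finset.sum_add_distrib, ← Finset.sum_add_distrib]
    apply Finset.sum_le_sum
    intro i _
    have hγi := hγ i
    have hdi := hd i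
    have hlog : Real.log (d i * S⁻¹ i i) ≤ d i * S⁻¹ i i - 1 :=
      Real.log_le_sub_one_of_pos (by positivity)
    rw [Real.log_mul hdi.ne' hγi.ne'] at hlog
    rw [Real.log_inv, inv_mul_cancel₀ hγi.ne']
    linarith
  linarith
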